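/- arXiv:1901.08622 — 3 statements merged into one kernel-verified Lean document; each statement's English description precedes it below -/
import Mathlib

section
/- Five hyperplanes cannot separate the 32 points γ₅(1), γ₅(2), ..., γ₅(32) on the moment curve in ℝ⁵ into distinct open cells: for any nonzero linear functionals f₁, ..., f₅ : ℝ⁵ → ℝ and reals c₁, ..., c₅ such that fᵢ(γ₅(j)) ≠ cᵢ for all i ∈ {1,...,5} and all j ∈ {1,...,32}, there exist distinct j, k ∈ {1,...,32} such that for every i ∈ {1,...,5}, the numbers fᵢ(γ₅(j)) − cᵢ and fᵢ(γ₅(k)) − cᵢ have the same sign (both strictly positive or both strictly negative). -/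
open Polynomial

noncomputable def momentCurve (d : ℕ) : ℝ → (Fin d → ℝ) :=
  fun t i => t ^ (i.val + 1)

section aux

lemma momentCurve_eq_sum (t : ℝ) :
    momentCurve 5 t = ∑ k : Fin 5, (t ^ (k.val + 1)) • (Pi.single k 1 : Fin 5 → ℝ) := by
  funext m
  rw [Finset.sum_apply]
  simp [momentCurve, Pi.single_apply, Finset.sum_ite_eq' Finset.univ m]

lemma cellPoly_eval (f : (Fin 5 → ℝ) →ₗ[ℝ] ℝ) (c : ℝ) (t : ℝ) :
    ((∑ k : Fin 5, C (f (Pi.single k 1)) * X ^ (k.val + 1)) - C c).eval t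
      = f (momentCurve 5 t) - c := by
  rw [momentCurve_eq_sum, map_sum]
  rw [Polynomial.eval_sub, Polynomial.eval_finset_sum, Polynomial.eval_C]
  congr 1
  apply Finset.sum_congr rfl
  intro k _
  rw [Polynomial.eval_mul, Polynomial.eval_C, Polynomial.eval_pow, Polynomial.eval_X,
    map_smul, smul_eq_mul, mul_comm]

lemma cellPoly_ne_zero (f : (Fin 5 → ℝ) →ₗ[ℝ] ℝ) (hf : f ≠ 0) (c : ℝ) :
    (∑ k : Fin 5, C (f (Pi.single k 1)) * X ^ (k.val + 1)) - C c ≠ 0 := by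
  intro h
  apply hf
  have hcoef : ∀ m : Fin 5, f (Pi.single m 1) = 0 := by
    intro m
    have := congrArg (fun q : Polynomial ℝ => q.coeff (m.val + 1)) h
    simp only [Polynomial.finset_sum_coeff, Polynomial.coeff_sub, Polynomial.coeff_C_mul,
      Polynomial.coeff_X_pow, Polynomial.coeff_C, Polynomial.coeff_zero] at this
    rw [Finset.sum_eq_single m] at this
    · simpa using this
    · intro b _ hb
      have : ¬ (m.val + 1 = b.val + 1) := by
        simp only [add_left_inj]
        exact fun hh => hb (Fin.ext hh.symm)
      simp [this]
      intro hh
      exact absurd (Fin.ext hh.symm) hb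
    · simp
  apply LinearMap.ext
  intro x
  show f x = 0
  have hx : x = ∑ k : Fin 5, (x k) • (Pi.single k 1 : Fin 5 → ℝ) := by
    funext m
    rw [Finset.sum_apply]
    simp [Pi.single_apply, Finset.sum_ite_eq' Finset.univ m]
  rw [hx, map_sum]
  simp [hcoef]

lemma cellPoly_natDegree_le (f : (Fin 5 → ℝ) →ₗ[ℝ] ℝ) (c : ℝ) :
    ((∑ k : Fin 5, C (f (Pi.single k 1)) * X ^ (k.val + 1)) - C c).natDegree ≤ 5 := by
  apply le_trans (Polynomial.natDegree_sub_le _ _)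
  simp only [max_le_iff, Polynomial.natDegree_C]
  constructor
  · apply Polynomial.natDegree_sum_le_of_forall_le
    intro k _
    apply le_trans (Polynomial.natDegree_C_mul_le _ _)
    rw [Polynomial.natDegree_X_pow]
    omega
  · omega

lemma sign_changes_le (p : Polynomial ℝ) (hp : p ≠ 0) (n : ℕ) (hdeg : p.natDegree ≤ n)
    (B : Finset ℕ) :
    (B.filter (fun j : ℕ => p.eval (j : ℝ) * p.eval ((j : ℝ) + 1) < 0)).card ≤ n := by
  have hroot : ∀ j : ℕ, p.eval (j : ℝ) * p.eval ((j : ℝ) + 1) < 0 →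
      ∃ t, t ∈ Set.Ioo (j : ℝ) ((j : ℝ) + 1) ∧ p.eval t = 0 := by
    intro j hj
    have hle : (j : ℝ) ≤ (j : ℝ) + 1 := by linarith
    have hcont : ContinuousOn (fun t => p.eval t) (Set.Icc (j : ℝ) ((j : ℝ) + 1)) :=
      (p.continuous_aeval).continuousOn
    rcases mul_neg_iff.mp hj with ⟨h1, h2⟩ | ⟨h1, h2⟩
    · have := intermediate_value_Ioo' hle hcont (a := (j:ℝ)) (b := (j:ℝ)+1)
      have h0 : (0:ℝ) ∈ Set.Ioo (p.eval ((j:ℝ)+1)) (p.eval (j:ℝ)) := ⟨h2, h1⟩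
      rcases this h0 with ⟨t, ht, het⟩
      exact ⟨t, ht, het⟩
    · have := intermediate_value_Ioo hle hcont (a := (j:ℝ)) (b := (j:ℝ)+1)
      have h0 : (0:ℝ) ∈ Set.Ioo (p.eval (j:ℝ)) (p.eval ((j:ℝ)+1)) := ⟨h1, h2⟩
      rcases this h0 with ⟨t, ht, het⟩
      exact ⟨t, ht, het⟩
  classical
  set F : ℕ → ℝ := fun j =>
    if h : p.eval (j : ℝ) * p.eval ((j : ℝ) + 1) < 0 then (hroot j h).choose else 0 with hF
  have hFmem : ∀ j : ℕ, ∀ h : p.eval (j : ℝ) * p.eval ((j : ℝ) + 1) < 0,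
      F j ∈ Set.Ioo (j : ℝ) ((j : ℝ) + 1) ∧ p.eval (F j) = 0 := by
    intro j h
    simp only [hF, dif_pos h]
    exact (hroot j h).choose_spec
  have hcard : (B.filter (fun j : ℕ => p.eval (j : ℝ) * p.eval ((j : ℝ) + 1) < 0)).card
      ≤ p.roots.toFinset.card := by
    apply Finset.card_le_card_of_injOn F
    · intro j hj
      rw [Finset.coe_filter, Set.mem_setOf_eq] at hj
      obtain ⟨hIoo, hz⟩ := hFmem j hj.2
      simp [Multiset.mem_toFinset, mem_roots, hp, hz]
    · intro j1 hj1 j2 hj2 heq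
      rw [Finset.coe_filter, Set.mem_setOf_eq] at hj1 hj2
      obtain ⟨h1, _⟩ := hFmem j1 hj1.2
      obtain ⟨h2, _⟩ := hFmem j2 hj2.2
      by_contra hne
      rcases Nat.lt_or_ge j1 j2 with h | h
      · have : (j1 : ℝ) + 1 ≤ (j2 : ℝ) := by exact_mod_cast Nat.succ_le_of_lt h
        have := h1.2.trans_le (this.trans h2.1.le)
        rw [heq] at this; exact lt_irrefl _ this
      · have hlt : j2 < j1 := by omega
        have : (j2 : ℝ) + 1 ≤ (j1 : ℝ) := by exact_mod_cast Nat.succ_le_of_lt hlt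
        have := h2.2.trans_le (this.trans h1.1.le)
        rw [heq] at this; exact lt_irrefl _ this
  calc _ ≤ p.roots.toFinset.card := hcard
    _ ≤ Multiset.card p.roots := Multiset.toFinset_card_le _
    _ ≤ p.natDegree := p.card_roots'
    _ ≤ n := hdeg

end aux

/-- Five hyperplanes cannot separate the 32 points `γ₅(1), …, γ₅(32)` on the
moment curve in ℝ⁵ into distinct open cells. -/
theorem five_hyperplanes_cannot_separate_32_moment_points
    (f : Fin 5 → ((Fin 5 → ℝ) →ₗ[ℝ] ℝ)) (hf : ∀ i, f i ≠ 0) (c : Fin 5 → ℝ)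
    (havoid : ∀ i : Fin 5, ∀ j ∈ Finset.Icc (1 : ℕ) 32,
      f i (momentCurve 5 (j : ℝ)) ≠ c i) :
    ∃ j ∈ Finset.Icc (1 : ℕ) 32, ∃ k ∈ Finset.Icc (1 : ℕ) 32, j ≠ k ∧
      ∀ i : Fin 5,
        (0 < f i (momentCurve 5 (j : ℝ)) - c i ∧
          0 < f i (momentCurve 5 (k : ℝ)) - c i) ∨
        (f i (momentCurve 5 (j : ℝ)) - c i < 0 ∧
          f i (momentCurve 5 (k : ℝ)) - c i < 0) := by
  classical
  set P : Fin 5 → Polynomial ℝ :=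
    fun i => (∑ k : Fin 5, C (f i (Pi.single k 1)) * X ^ (k.val + 1)) - C (c i) with hP
  have hPeval : ∀ i t, (P i).eval t = f i (momentCurve 5 t) - c i :=
    fun i t => cellPoly_eval (f i) (c i) t
  have hPne : ∀ i, P i ≠ 0 := fun i => cellPoly_ne_zero (f i) (hf i) (c i)
  have hPdeg : ∀ i, (P i).natDegree ≤ 5 := fun i => cellPoly_natDegree_le (f i) (c i)
  set B : Finset ℕ := Finset.Icc 1 31 with hB
  set T : Finset ℕ :=
    B.filter (fun j : ℕ => ∃ i : Fin 5, (P i).eval (j : ℝ) * (P i).eval ((j : ℝ) + 1) < 0)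
    with hT
  have hTsub : T ⊆ Finset.univ.biUnion
      (fun i : Fin 5 => B.filter (fun j : ℕ =>
        (P i).eval (j : ℝ) * (P i).eval ((j : ℝ) + 1) < 0)) := by
    intro j hj
    rw [hT, Finset.mem_filter] at hj
    obtain ⟨hjB, i, hi⟩ := hj
    exact Finset.mem_biUnion.mpr ⟨i, Finset.mem_univ i, Finset.mem_filter.mpr ⟨hjB, hi⟩⟩
  have hTcard : T.card ≤ 25 := by
    calc T.card ≤ _ := Finset.card_le_card hTsub
      _ ≤ ∑ i : Fin 5, (B.filter (fun j : ℕ =>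
            (P i).eval (j : ℝ) * (P i).eval ((j : ℝ) + 1) < 0)).card :=
          Finset.card_biUnion_le
      _ ≤ ∑ _i : Fin 5, 5 := Finset.sum_le_sum
          (fun i _ => sign_changes_le (P i) (hPne i) 5 (hPdeg i) B)
      _ = 25 := by simp
  have hBcard : B.card = 31 := by rw [hB, Nat.card_Icc]
  have hex : ∃ j ∈ B, j ∉ T := by
    by_contra h
    push_neg at h
    have : B ⊆ T := h
    have := Finset.card_le_card this
    omega
  obtain ⟨j, hjB, hjT⟩ := hex
  have hj1 : 1 ≤ j ∧ j ≤ 31 := by rwa [hB, Finset.mem_Icc] at hjB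
  refine ⟨j, ?_, j + 1, ?_, by omega, ?_⟩
  · rw [Finset.mem_Icc]; omega
  · rw [Finset.mem_Icc]; omega
  intro i
  have hnochange : ¬ ((P i).eval (j : ℝ) * (P i).eval ((j : ℝ) + 1) < 0) := by
    intro h
    exact hjT (Finset.mem_filter.mpr ⟨hjB, ⟨i, h⟩⟩)
  have hne1 : (P i).eval (j : ℝ) ≠ 0 := by
    rw [hPeval, sub_ne_zero]
    exact havoid i j (Finset.mem_Icc.mpr ⟨hj1.1, by omega⟩)
  have hcast : ((j + 1 : ℕ) : ℝ) = (j : ℝ) + 1 := by push_cast; ring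
  have hne2 : (P i).eval ((j : ℝ) + 1) ≠ 0 := by
    rw [← hcast, hPeval, sub_ne_zero]
    exact havoid i (j + 1) (Finset.mem_Icc.mpr ⟨by omega, by omega⟩)
  have hpos : 0 < (P i).eval (j : ℝ) * (P i).eval ((j : ℝ) + 1) := by
    rcases lt_trichotomy ((P i).eval (j : ℝ) * (P i).eval ((j : ℝ) + 1)) 0 with h | h | h
    · exact absurd h hnochange
    · rcases mul_eq_zero.mp h with h' | h'
      · exact absurd h' hne1
      · exact absurd h' hne2
    · exact h
  have h1 := hPeval i (j : ℝ)
  have h2 := hPeval i ((j : ℝ) + 1)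
  rw [hcast]
  rcases mul_pos_iff.mp hpos with ⟨ha, hb⟩ | ⟨ha, hb⟩
  · left; rw [← h1, ← h2]; exact ⟨ha, hb⟩
  · right; rw [← h1, ← h2]; exact ⟨ha, hb⟩
end

section
/- There exists a set P of 32 points in ℝ⁵, no 6 of which lie on a common affine hyperplane, such that for any 5 affine hyperplanes in ℝ⁵ it is impossible that the 32 points of P lie in 32 pairwise distinct open cells of the hyperplane arrangement. That is, for any nonzero linear functionals f₁, ..., f₅ : ℝ⁵ → ℝ and reals c₁, ..., c₅, either some point p ∈ P satisfies fᵢ(p) = cᵢ for some i, or there exist two distinct points p, q ∈ P such that for every i ∈ {1,...,5} the numbers fᵢ(p) − cᵢ and fᵢ(q) − cᵢ have the same sign. -/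
open Polynomial Finset

noncomputable def myPoly (f : (Fin 5 → ℝ) →ₗ[ℝ] ℝ) (c : ℝ) : ℝ[X] :=
  (∑ i : Fin 5, C (f fun j => if i = j then 1 else 0) * X ^ ((i : ℕ) + 1)) - C c

lemma myPoly_eval (f : (Fin 5 → ℝ) →ₗ[ℝ] ℝ) (c : ℝ) (t : ℝ) :
    (myPoly f c).eval t = f (fun i => t ^ ((i : ℕ) + 1)) - c := by
  rw [LinearMap.pi_apply_eq_sum_univ f (fun i : Fin 5 => t ^ ((i : ℕ) + 1))]
  simp only [myPoly, eval_sub, eval_C, eval_finset_sum, eval_mul, eval_pow, eval_X, smul_eq_mul]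
  congr 1
  exact Finset.sum_congr rfl (fun i _ => by ring)

lemma myPoly_ne_zero (f : (Fin 5 → ℝ) →ₗ[ℝ] ℝ) (hf : f ≠ 0) (c : ℝ) :
    myPoly f c ≠ 0 := by
  intro h
  apply hf
  have key : ∀ i : Fin 5, f (fun j => if i = j then 1 else 0) = 0 := by
    intro i
    have h2 := congrArg (fun p => Polynomial.coeff p ((i : ℕ) + 1)) h
    simp only [myPoly, coeff_sub, coeff_C, Polynomial.finset_sum_coeff,
      coeff_C_mul, coeff_X_pow, coeff_zero] at h2
    rw [Finset.sum_eq_single i] at h2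
    · simpa using h2
    · intro j _ hj
      have hne : ((i:ℕ)+1 : ℕ) ≠ (j:ℕ)+1 := by
        intro hh
        exact hj (Fin.val_injective (by omega : (j:ℕ) = i))
      simp [hne, Fin.val_inj, Ne.symm hj]
    · simp
  apply LinearMap.ext
  intro x
  rw [LinearMap.pi_apply_eq_sum_univ f x]
  simp [key]

lemma myPoly_natDegree_le (f : (Fin 5 → ℝ) →ₗ[ℝ] ℝ) (c : ℝ) :
    (myPoly f c).natDegree ≤ 5 := by
  unfold myPoly
  refine le_trans (natDegree_sub_le _ _) ?_
  simp only [natDegree_C, max_le_iff]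
  constructor
  · refine Polynomial.natDegree_sum_le_of_forall_le _ _ ?_
    intro i _
    refine le_trans (natDegree_C_mul_le _ _) ?_
    rw [natDegree_X_pow]
    omega
  · omega

lemma myPoly_roots_card (f : (Fin 5 → ℝ) →ₗ[ℝ] ℝ) (c : ℝ) :
    (myPoly f c).roots.toFinset.card ≤ 5 :=
  le_trans (Multiset.toFinset_card_le _)
    (le_trans (Polynomial.card_roots' _) (myPoly_natDegree_le f c))

/-- There is a set of 32 points in ℝ⁵ in general position (no 6 on a common
affine hyperplane) that cannot be put into 32 pairwise distinct open cells by
any arrangement of 5 affine hyperplanes. -/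
theorem exists_32_points_not_separable_by_five_hyperplanes :
    ∃ P : Finset (Fin 5 → ℝ), P.card = 32 ∧
      (∀ f : (Fin 5 → ℝ) →ₗ[ℝ] ℝ, f ≠ 0 → ∀ c : ℝ,
        (P.filter (fun p => f p = c)).card ≤ 5) ∧
      (∀ f : Fin 5 → ((Fin 5 → ℝ) →ₗ[ℝ] ℝ), (∀ i, f i ≠ 0) →
        ∀ c : Fin 5 → ℝ,
          (∃ p ∈ P, ∃ i : Fin 5, f i p = c i) ∨
          (∃ p ∈ P, ∃ q ∈ P, p ≠ q ∧
            ∀ i : Fin 5,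
              (0 < f i p - c i ∧ 0 < f i q - c i) ∨
              (f i p - c i < 0 ∧ f i q - c i < 0))) := by
  classical
  set pts : ℕ → (Fin 5 → ℝ) := fun k i => (k : ℝ) ^ ((i : ℕ) + 1) with hpts
  have hpts0 : ∀ k : ℕ, pts k 0 = (k : ℝ) := by intro k; simp [hpts]
  have heval : ∀ (f : (Fin 5 → ℝ) →ₗ[ℝ] ℝ) (c : ℝ) (k : ℕ),
      (myPoly f c).eval (k : ℝ) = f (pts k) - c := by
    intro f c k; rw [myPoly_eval]
  have hptsinj : Set.InjOn pts (Finset.range 32 : Finset ℕ) := by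
    intro a _ b _ hab
    have h0 := congrArg (fun p => p 0) hab
    simp only [hpts0] at h0
    exact_mod_cast h0
  refine ⟨(Finset.range 32).image pts, ?_, ?_, ?_⟩
  · rw [Finset.card_image_of_injOn hptsinj, Finset.card_range]
  · intro f hf c
    refine le_trans (Finset.card_le_card_of_injOn (fun p => p 0) ?_ ?_)
      (myPoly_roots_card f c)
    · intro p hp
      simp only [Finset.mem_coe, Finset.mem_filter, Finset.mem_image, Finset.mem_range] at hp
      obtain ⟨⟨k, hk, rfl⟩, hfp⟩ := hp
      show pts k 0 ∈ _
      rw [hpts0, Finset.mem_coe, Multiset.mem_toFinset, mem_roots (myPoly_ne_zero f hf c)]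
      show (myPoly f c).eval _ = 0
      rw [heval f c k, hfp, sub_self]
    · intro p hp p' hp' hpp
      simp only [Finset.coe_filter, Set.mem_setOf_eq, Finset.mem_image,
        Finset.mem_range] at hp hp'
      obtain ⟨⟨k, hk, rfl⟩, -⟩ := hp
      obtain ⟨⟨k', hk', rfl⟩, -⟩ := hp'
      have hpp' : pts k 0 = pts k' 0 := hpp
      rw [hpts0, hpts0] at hpp'
      replace hpp := hpp'
      have : k = k' := by exact_mod_cast hpp
      rw [this]
  · intro f hf c
    by_cases h1 : ∃ p ∈ (Finset.range 32).image pts, ∃ i, f i p = c i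
    · exact Or.inl h1
    push_neg at h1
    right
    by_contra h2
    push_neg at h2
    -- all values nonzero
    have hnz : ∀ k ∈ Finset.range 32, ∀ i : Fin 5, f i (pts k) - c i ≠ 0 := by
      intro k hk i
      exact sub_ne_zero.mpr (h1 (pts k) (Finset.mem_image_of_mem pts hk) i)
    -- the sign vector
    set s : ℕ → Fin 5 → Bool := fun k i => decide (0 < f i (pts k) - c i) with hs
    -- distinct points get distinct sign vectors
    have hsinj : ∀ k ∈ Finset.range 32, ∀ k' ∈ Finset.range 32, k ≠ k' →
        s k ≠ s k' := by
      intro k hk k' hk' hne hsk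
      have hne' : pts k ≠ pts k' := fun hh => hne (hptsinj (by simpa using hk) (by simpa using hk') hh)
      obtain ⟨i, hi⟩ := h2 (pts k) (Finset.mem_image_of_mem pts hk)
        (pts k') (Finset.mem_image_of_mem pts hk') hne'
      have hv := hnz k hk i
      have hw := hnz k' hk' i
      have hsi : (0 < f i (pts k) - c i) ↔ (0 < f i (pts k') - c i) := by
        have h3 := congrFun hsk i
        simp only [hs, decide_eq_decide] at h3
        exact h3
      rcases hv.lt_or_gt with hv' | hv'
      · have hw' : 0 ≤ f i (pts k') - c i := hi.2 hv'
        have h4 : 0 < f i (pts k') - c i := hw'.lt_of_ne (Ne.symm hw)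
        linarith [hsi.mpr h4]
      · have hw1 : f i (pts k') - c i ≤ 0 := hi.1 hv'
        exact absurd (hsi.mp hv') (not_lt.mpr hw1)
    -- each consecutive pair differs somewhere
    have hcons : ∀ k : ℕ, ∃ i : Fin 5, k ∈ Finset.range 31 → s k i ≠ s (k + 1) i := by
      intro k
      by_cases hk : k ∈ Finset.range 31
      · have hk32 : k ∈ Finset.range 32 := by simp at hk ⊢; omega
        have hk32' : k + 1 ∈ Finset.range 32 := by simp at hk ⊢; omega
        have := hsinj k hk32 (k + 1) hk32' (by omega)
        by_contra hall
        push_neg at hall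
        exact this (funext fun i => (hall i).2)
      · exact ⟨0, fun h => absurd h hk⟩
    choose I hI using hcons
    set T : Finset (ℕ × Fin 5) :=
      (Finset.range 31 ×ˢ (Finset.univ : Finset (Fin 5))).filter
        (fun x => s x.1 x.2 ≠ s (x.1 + 1) x.2) with hT
    -- lower bound
    have hlow : 31 ≤ T.card := by
      have := Finset.card_le_card_of_injOn (s := Finset.range 31) (t := T) (fun k => (k, I k))
        (fun k hk => by
          refine Finset.mem_filter.mpr ⟨Finset.mem_product.mpr ⟨hk, Finset.mem_univ _⟩, ?_⟩
          exact hI k hk)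
        (fun a _ b _ hab => (Prod.mk.injEq _ _ _ _).mp hab |>.1)
      simpa using this
    -- for each element of T, a root strictly between
    have hroot : ∀ x : ℕ × Fin 5, ∃ r : ℝ, x ∈ T →
        ((x.1 : ℝ) < r ∧ r < (x.1 : ℝ) + 1) ∧
          (myPoly (f x.2) (c x.2)).eval r = 0 := by
      rintro ⟨k, i⟩
      by_cases hx : (k, i) ∈ T
      swap
      · exact ⟨0, fun h => absurd h hx⟩
      simp only [hT, Finset.mem_filter, Finset.mem_product, Finset.mem_range] at hx
      obtain ⟨⟨hk31, -⟩, hdiff⟩ := hx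
      have hk32 : k ∈ Finset.range 32 := by simp; omega
      have hk32' : k + 1 ∈ Finset.range 32 := by simp; omega
      have hv := hnz k hk32 i
      have hw := hnz (k + 1) hk32' i
      set Q : ℝ[X] := myPoly (f i) (c i) with hQ
      have hQk : Q.eval (k : ℝ) = f i (pts k) - c i := heval _ _ _
      have hQk1 : Q.eval ((k : ℝ) + 1) = f i (pts (k + 1)) - c i := by
        have := heval (f i) (c i) (k + 1)
        push_cast at this
        exact this
      have hcont : ContinuousOn (fun t => Q.eval t) (Set.Icc (k : ℝ) ((k : ℝ) + 1)) :=
        (Polynomial.continuous Q).continuousOn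
      have hle : (k : ℝ) ≤ (k : ℝ) + 1 := by linarith
      have hsign : (Q.eval (k : ℝ) < 0 ∧ 0 < Q.eval ((k : ℝ) + 1)) ∨
          (0 < Q.eval (k : ℝ) ∧ Q.eval ((k : ℝ) + 1) < 0) := by
        rw [hQk, hQk1]
        rcases hv.lt_or_gt with h | h
        · rcases hw.lt_or_gt with h' | h'
          · exfalso; apply hdiff
            simp only [hs, decide_eq_decide]
            constructor <;> intro h'' <;> linarith
          · exact Or.inl ⟨h, h'⟩
        · rcases hw.lt_or_gt with h' | h'
          · exact Or.inr ⟨h, h'⟩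
          · exfalso; apply hdiff
            simp only [hs, decide_eq_decide]
            constructor <;> intro h'' <;> linarith
      rcases hsign with ⟨ha, hb⟩ | ⟨ha, hb⟩
      · have h0 : (0 : ℝ) ∈ Set.Ioo (Q.eval (k : ℝ)) (Q.eval ((k : ℝ) + 1)) := ⟨ha, hb⟩
        obtain ⟨r, hr1, hr2⟩ := intermediate_value_Ioo hle hcont h0
        exact ⟨r, fun _ => ⟨⟨hr1.1, hr1.2⟩, hr2⟩⟩
      · have h0 : (0 : ℝ) ∈ Set.Ioo (Q.eval ((k : ℝ) + 1)) (Q.eval (k : ℝ)) := ⟨hb, ha⟩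
        obtain ⟨r, hr1, hr2⟩ := intermediate_value_Ioo' hle hcont h0
        exact ⟨r, fun _ => ⟨⟨hr1.1, hr1.2⟩, hr2⟩⟩
    choose r hr using hroot
    -- upper bound via roots
    set B : Finset (ℝ × Fin 5) :=
      Finset.univ.biUnion
        (fun i : Fin 5 => ((myPoly (f i) (c i)).roots.toFinset).image (fun t => (t, i)))
      with hB
    have hBcard : B.card ≤ 25 := by
      refine le_trans (Finset.card_biUnion_le) ?_
      calc ∑ i : Fin 5, (((myPoly (f i) (c i)).roots.toFinset).image (fun t => (t, i))).card
          ≤ ∑ _i : Fin 5, 5 := by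
            refine Finset.sum_le_sum fun i _ => ?_
            exact le_trans (Finset.card_image_le) (myPoly_roots_card _ _)
        _ = 25 := by simp
    have hup : T.card ≤ B.card := by
      refine Finset.card_le_card_of_injOn (fun x => (r x, x.2)) ?_ ?_
      · intro x hx
        obtain ⟨hIoo, hev⟩ := hr x hx
        simp only [hB, Finset.mem_coe, Finset.mem_biUnion, Finset.mem_univ]
        refine ⟨x.2, trivial, Finset.mem_image.mpr ⟨r x, ?_, rfl⟩⟩
        rw [Multiset.mem_toFinset, mem_roots (myPoly_ne_zero _ (hf x.2) _)]
        exact hev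
      · intro x hx x' hx' hxx
        obtain ⟨h1x, -⟩ := hr x (by simpa using hx)
        obtain ⟨h1x', -⟩ := hr x' (by simpa using hx')
        have heq2 : x.2 = x'.2 := ((Prod.mk.injEq _ _ _ _).mp hxx).2
        have heqr : r x = r x' := ((Prod.mk.injEq _ _ _ _).mp hxx).1
        have heq1 : x.1 = x'.1 := by
          rcases lt_trichotomy x.1 x'.1 with h | h | h
          · exfalso
            have : (x.1 : ℝ) + 1 ≤ (x'.1 : ℝ) := by exact_mod_cast h
            rw [heqr] at h1x
            linarith [h1x.2, h1x'.1]
          · exact h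
          · exfalso
            have : (x'.1 : ℝ) + 1 ≤ (x.1 : ℝ) := by exact_mod_cast h
            rw [heqr] at h1x
            linarith [h1x.1, h1x'.2]
        exact Prod.ext heq1 heq2
    omega
end

section
/- For every d ≥ 5, d hyperplanes cannot separate the 2^d points γ_d(1), γ_d(2), ..., γ_d(2^d) on the moment curve in ℝ^d into distinct open cells: for any nonzero linear functionals f₁, ..., f_d : ℝ^d → ℝ and reals c₁, ..., c_d such that fᵢ(γ_d(j)) ≠ cᵢ for all i ∈ {1,...,d} and all j ∈ {1,...,2^d}, there exist distinct j, k ∈ {1,...,2^d} such that for every i ∈ {1,...,d}, the numbers fᵢ(γ_d(j)) − cᵢ and fᵢ(γ_d(k)) − cᵢ have the same sign (both strictly positive or both strictly negative). -/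
open Polynomial

/-- Hyperplane polynomial `t ↦ f(γ(t)) - c`. -/
noncomputable def hypPoly (d : ℕ) (f : (Fin d → ℝ) →ₗ[ℝ] ℝ) (c : ℝ) : Polynomial ℝ :=
  (∑ k : Fin d, C (f fun j => if k = j then 1 else 0) * X ^ (k.1 + 1)) - C c

lemma hypPoly_eval (d : ℕ) (f : (Fin d → ℝ) →ₗ[ℝ] ℝ) (c : ℝ) (t : ℝ) :
    (hypPoly d f c).eval t = f (momentCurve d t) - c := by
  have h := LinearMap.pi_apply_eq_sum_univ f (momentCurve d t)
  simp only [hypPoly, eval_sub, eval_finset_sum, eval_mul, eval_C, eval_pow, eval_X, h,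
    momentCurve, smul_eq_mul]
  rw [sub_left_inj]
  exact Finset.sum_congr rfl fun x _ => mul_comm _ _

lemma hypPoly_natDegree_le (d : ℕ) (f : (Fin d → ℝ) →ₗ[ℝ] ℝ) (c : ℝ) :
    (hypPoly d f c).natDegree ≤ d := by
  unfold hypPoly
  refine le_trans (natDegree_sub_le _ _) ?_
  rw [max_le_iff]
  constructor
  · refine natDegree_sum_le_of_forall_le _ _ fun k _ => ?_
    exact le_trans (natDegree_C_mul_X_pow_le _ _) k.2
  · simp

lemma hypPoly_ne_zero (d : ℕ) (f : (Fin d → ℝ) →ₗ[ℝ] ℝ) (c : ℝ) (hf : f ≠ 0) :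
    hypPoly d f c ≠ 0 := by
  have hex : ∃ k : Fin d, f (fun j => if k = j then 1 else 0) ≠ 0 := by
    by_contra h
    push_neg at h
    apply hf
    refine LinearMap.ext fun x => ?_
    rw [LinearMap.pi_apply_eq_sum_univ f x]
    simp [h]
  obtain ⟨k, hk⟩ := hex
  intro h0
  apply hk
  have := congrArg (fun p => Polynomial.coeff p (k.1 + 1)) h0
  simp only [hypPoly, coeff_sub, coeff_zero] at this
  rw [Polynomial.finset_sum_coeff] at this
  simp only [coeff_C_mul, coeff_X_pow] at this
  rw [Finset.sum_eq_single k] at this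
  · rw [if_pos rfl, mul_one, Polynomial.coeff_C, if_neg (Nat.succ_ne_zero _), sub_zero] at this
    exact this
  · intro b _ hb
    have hbk : b.1 + 1 ≠ k.1 + 1 := fun h => hb (Fin.ext (Nat.succ_injective h))
    rw [if_neg (Ne.symm hbk), mul_zero]
  · simp

lemma sq_lt_two_pow (d : ℕ) (hd : 5 ≤ d) : d * d + 1 < 2 ^ d := by
  induction d with
  | zero => omega
  | succ n ih =>
    rcases Nat.lt_or_ge n 5 with h | h
    · interval_cases n <;> simp_all
    · have := ih (by omega)
      have h2 : 2 * n ≤ n * n := by nlinarith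
      have h3 : (n + 1) * (n + 1) = n * n + 2 * n + 1 := by ring
      have : 2 ^ (n + 1) = 2 * 2 ^ n := by ring
      omega

/-- For every `d ≥ 5`, `d` hyperplanes cannot separate the `2^d` points
`γ_d(1), …, γ_d(2^d)` on the moment curve in ℝ^d into distinct open cells. -/
theorem d_hyperplanes_cannot_separate_two_pow_d_moment_points
    (d : ℕ) (hd : 5 ≤ d) (f : Fin d → ((Fin d → ℝ) →ₗ[ℝ] ℝ))
    (hf : ∀ i, f i ≠ 0) (c : Fin d → ℝ)
    (havoid : ∀ i : Fin d, ∀ j ∈ Finset.Icc (1 : ℕ) (2 ^ d),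
      f i (momentCurve d (j : ℝ)) ≠ c i) :
    ∃ j ∈ Finset.Icc (1 : ℕ) (2 ^ d), ∃ k ∈ Finset.Icc (1 : ℕ) (2 ^ d), j ≠ k ∧
      ∀ i : Fin d,
        (0 < f i (momentCurve d (j : ℝ)) - c i ∧
          0 < f i (momentCurve d (k : ℝ)) - c i) ∨
        (f i (momentCurve d (j : ℝ)) - c i < 0 ∧
          f i (momentCurve d (k : ℝ)) - c i < 0) := by
  by_contra hcon
  push_neg at hcon
  set p : Fin d → Polynomial ℝ := fun i => hypPoly d (f i) (c i) with hp
  -- values at the sample points are nonzero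
  have hne : ∀ i : Fin d, ∀ j ∈ Finset.Icc (1 : ℕ) (2 ^ d), (p i).eval (j : ℝ) ≠ 0 := by
    intro i j hj
    rw [hp, hypPoly_eval]
    exact sub_ne_zero_of_ne (havoid i j hj)
  -- for each consecutive pair, there is a root in between
  have hroot : ∀ j ∈ Finset.Ico (1 : ℕ) (2 ^ d),
      ∃ i : Fin d, ∃ x : ℝ, x ∈ Set.Ioo (j : ℝ) ((j : ℝ) + 1) ∧ (p i).eval x = 0 := by
    intro j hj
    rw [Finset.mem_Ico] at hj
    have hj1 : j ∈ Finset.Icc (1 : ℕ) (2 ^ d) := Finset.mem_Icc.2 ⟨hj.1, le_of_lt hj.2⟩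
    have hj2 : j + 1 ∈ Finset.Icc (1 : ℕ) (2 ^ d) := Finset.mem_Icc.2 ⟨by omega, hj.2⟩
    obtain ⟨i, hi⟩ := hcon j hj1 (j + 1) hj2 (by omega)
    refine ⟨i, ?_⟩
    have ha : f i (momentCurve d (j : ℝ)) - c i = (p i).eval (j : ℝ) := (hypPoly_eval ..).symm
    have hb : f i (momentCurve d ((j + 1 : ℕ) : ℝ)) - c i = (p i).eval ((j : ℝ) + 1) := by
      rw [hp, hypPoly_eval]; push_cast; ring_nf
    rw [ha, hb] at hi
    have hna : (p i).eval (j : ℝ) ≠ 0 := hne i j hj1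
    have hnb : (p i).eval ((j : ℝ) + 1) ≠ 0 := by
      have := hne i (j + 1) hj2
      rwa [Nat.cast_add, Nat.cast_one] at this
    have hcont : ContinuousOn (fun x => (p i).eval x) (Set.Icc (j : ℝ) ((j : ℝ) + 1)) :=
      ((p i).continuous).continuousOn
    have hle : (j : ℝ) ≤ (j : ℝ) + 1 := by linarith
    rcases hna.lt_or_gt with haneg | hapos
    · rcases hnb.lt_or_gt with hbneg | hbpos
      · exact absurd (hi.2 haneg) (not_le.2 hbneg)
      · have : (0 : ℝ) ∈ Set.Ioo ((p i).eval (j : ℝ)) ((p i).eval ((j : ℝ) + 1)) :=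
          ⟨haneg, hbpos⟩
        obtain ⟨x, hx, hx0⟩ := intermediate_value_Ioo hle hcont this
        exact ⟨x, hx, hx0⟩
    · rcases hnb.lt_or_gt with hbneg | hbpos
      · have : (0 : ℝ) ∈ Set.Ioo ((p i).eval ((j : ℝ) + 1)) ((p i).eval (j : ℝ)) :=
          ⟨hbneg, hapos⟩
        obtain ⟨x, hx, hx0⟩ := intermediate_value_Ioo' hle hcont this
        exact ⟨x, hx, hx0⟩
      · exact absurd (hi.1 hapos) (not_le.2 hbpos)
  haveI : NeZero d := ⟨by omega⟩
  choose! I X hX hX0 using hroot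
  -- counting
  set T : Finset ((_ : Fin d) × ℝ) := Finset.univ.sigma (fun i => (p i).roots.toFinset) with hT
  have hcard : (Finset.Ico (1 : ℕ) (2 ^ d)).card ≤ T.card := by
    apply Finset.card_le_card_of_injOn (fun j => ⟨I j, X j⟩)
    · intro j hj
      rw [hT, Finset.mem_coe, Finset.mem_sigma]
      refine ⟨Finset.mem_univ _, ?_⟩
      exact Multiset.mem_toFinset.2
        ((Polynomial.mem_roots (hypPoly_ne_zero d (f (I j)) (c (I j)) (hf _))).2 (hX0 j hj))
    · intro j hj k hk heq
      have hXeq : X j = X k := by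
        have := (Sigma.mk.inj_iff.1 heq).2
        exact eq_of_heq this
      have h1 := hX j hj
      have h2 := hX k hk
      rw [hXeq] at h1
      have hjk : (j : ℝ) < (k : ℝ) + 1 := lt_trans h1.1 h2.2
      have hkj : (k : ℝ) < (j : ℝ) + 1 := lt_trans h2.1 h1.2
      have : (j : ℝ) < (k : ℝ) + 1 ∧ (k : ℝ) < (j : ℝ) + 1 := ⟨hjk, hkj⟩
      have hj' : j < k + 1 := by exact_mod_cast (by push_cast; exact hjk : (j : ℝ) < ((k + 1 : ℕ) : ℝ))
      have hk' : k < j + 1 := by exact_mod_cast (by push_cast; exact hkj : (k : ℝ) < ((j + 1 : ℕ) : ℝ))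
      omega
  have hTcard : T.card ≤ d * d := by
    rw [hT, Finset.card_sigma]
    calc ∑ i : Fin d, (p i).roots.toFinset.card
        ≤ ∑ _i : Fin d, d := by
          apply Finset.sum_le_sum
          intro i _
          exact le_trans (Multiset.toFinset_card_le _)
            (le_trans (p i).card_roots' (hypPoly_natDegree_le ..))
      _ = d * d := by simp [Finset.sum_const, mul_comm]
  have hIco : (Finset.Ico (1 : ℕ) (2 ^ d)).card = 2 ^ d - 1 := by
    rw [Nat.card_Ico]
  have := sq_lt_two_pow d hd
  omega
end
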